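/- Let a ∈ (-1,1), s = (1-a)/2, and define w : ℝ² → ℝ by w(x,y) = (√(x² + y²) - x)^s. Then w satisfies the equation ∂_x(|y|^a ∂_x w) + ∂_y(|y|^a ∂_y w) = 0 at every point (x,y) with y ≠ 0. -/

import Mathlib

/-- w(x,y) = (√(x²+y²) - x)^s is a-harmonic away from {y = 0}:
∂_x(|y|^a ∂_x w) + ∂_y(|y|^a ∂_y w) = 0 for y ≠ 0, where s = (1-a)/2. -/
theorem stmt_2 (a s : ℝ) (ha : a ∈ Set.Ioo (-1 : ℝ) 1) (hs : s = (1 - a) / 2)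
    (w : ℝ → ℝ → ℝ)
    (hw : ∀ x y : ℝ, w x y = (Real.sqrt (x ^ 2 + y ^ 2) - x) ^ s) :
    ∀ x y : ℝ, y ≠ 0 →
      deriv (fun x' => |y| ^ a * deriv (fun t => w t y) x') x
        + deriv (fun y' => |y'| ^ a * deriv (fun t => w x t) y') y = 0 := by
  intro x y hy
  have hy2 : (0:ℝ) < y ^ 2 := by positivity
  have habs : ∀ z : ℝ, |z| ^ a = (z ^ 2) ^ (a/2) := by
    intro z
    rw [← sq_abs, ← Real.rpow_natCast |z| 2, ← Real.rpow_mul (abs_nonneg z)]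
    norm_num
    congr 1; ring
  have hsq : ∀ z c : ℝ, 0 < z^2 + c^2 →
      HasDerivAt (fun t => Real.sqrt (t^2+c^2)) (z / Real.sqrt (z^2+c^2)) z := by
    intro z c h
    have h1 := (Real.hasDerivAt_sqrt h.ne').comp z (((hasDerivAt_pow 2 z)).add_const (c^2))
    refine h1.congr_deriv ?_
    have : Real.sqrt (z^2+c^2) ≠ 0 := by positivity
    field_simp; ring
  have hupos : ∀ z c : ℝ, c ≠ 0 → 0 < Real.sqrt (z^2+c^2) - z := by
    intro z c hc
    have hc2 : 0 < c^2 := by positivity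
    have h1 : Real.sqrt (z^2) < Real.sqrt (z^2+c^2) := by
      apply Real.sqrt_lt_sqrt (sq_nonneg z); linarith
    have h2 : z ≤ Real.sqrt (z^2) := by
      rw [Real.sqrt_sq_eq_abs]; exact le_abs_self z
    linarith
  -- inner x-derivative
  have hdx : ∀ t : ℝ, HasDerivAt (fun t => w t y)
      ((t / Real.sqrt (t^2+y^2) - 1) * s * (Real.sqrt (t^2+y^2) - t) ^ (s-1)) t := by
    intro t
    have hpos : 0 < t^2 + y^2 := by positivity
    have hu := (hsq t y hpos).sub (hasDerivAt_id t)
    simp only [Pi.sub_def, id_eq] at hu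
    have hune := (hupos t y hy).ne'
    have h2 := hu.rpow_const (p := s) (Or.inl hune)
    have heq : (fun t => w t y) = fun t => (Real.sqrt (t^2+y^2) - t) ^ s := by
      funext t'; rw [hw t' y]
    rw [heq]; exact h2
  -- inner y-derivative (for t ≠ 0)
  have hdy : ∀ t : ℝ, t ≠ 0 → HasDerivAt (fun t => w x t)
      ((t / Real.sqrt (x^2+t^2)) * s * (Real.sqrt (x^2+t^2) - x) ^ (s-1)) t := by
    intro t ht
    have hpos : 0 < t^2 + x^2 := by positivity
    have hS : HasDerivAt (fun t' => Real.sqrt (x^2+t'^2)) (t / Real.sqrt (x^2+t^2)) t := by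
      have := hsq t x hpos
      simp only [add_comm (x^2)] at this ⊢
      exact this
    have hune := (hupos x t ht).ne'
    have h2 := (hS.sub_const x).rpow_const (p := s) (Or.inl hune)
    have heq : (fun t => w x t) = fun t' => (Real.sqrt (x^2+t'^2) - x) ^ s := by
      funext t'; rw [hw x t']
    rw [heq]; exact h2
  -- point data
  have hpos : (0:ℝ) < x^2 + y^2 := by positivity
  set r := Real.sqrt (x^2+y^2) with hrdef
  have hr : 0 < r := Real.sqrt_pos.mpr hpos
  have hr2 : r^2 = x^2+y^2 := Real.sq_sqrt hpos.le
  have hu0 : 0 < r - x := hupos x y hy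
  -- outer x derivative
  have hR : HasDerivAt (fun t => Real.sqrt (t^2+y^2)) (x / r) x := hsq x y hpos
  have hux : HasDerivAt (fun t => Real.sqrt (t^2+y^2) - t) (x/r - 1) x := by
    have := hR.sub (hasDerivAt_id x); simpa [Pi.sub_def] using this
  have hq1 : HasDerivAt (fun x' => x'/Real.sqrt (x'^2+y^2) - 1) ((1*r - x*(x/r))/r^2) x := by
    have := ((hasDerivAt_id x).div hR hr.ne').sub_const (1:ℝ); simpa using this
  have hq2 : HasDerivAt (fun x' => (Real.sqrt (x'^2+y^2)-x')^(s-1))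
      ((x/r - 1)*(s-1)*(r-x)^(s-1-1)) x := hux.rpow_const (Or.inl hu0.ne')
  have hpx := ((hq1.mul_const s).mul hq2).const_mul (|y|^a)
  have hfx : (fun x' => |y|^a * deriv (fun t => w t y) x')
      = fun x' => |y|^a * ((x'/Real.sqrt (x'^2+y^2) - 1)*s*(Real.sqrt (x'^2+y^2)-x')^(s-1)) := by
    funext x'; rw [(hdx x').deriv]
  -- outer y derivative
  have hS : HasDerivAt (fun t' => Real.sqrt (x^2+t'^2)) (y / r) y := by
    have h := hsq y x (by positivity)
    rw [show (fun t => Real.sqrt (t^2+x^2)) = (fun t' => Real.sqrt (x^2+t'^2)) from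
        funext fun t => by rw [add_comm], add_comm (y^2) (x^2)] at h
    exact h
  have huy0 : 0 < Real.sqrt (x^2+y^2) - x := hupos x y hy
  have hq1y : HasDerivAt (fun y' => y'/Real.sqrt (x^2+y'^2)) ((1*r - y*(y/r))/r^2) y := by
    have h0 : Real.sqrt (x^2+y^2) ≠ 0 := hr.ne'
    have h := (hasDerivAt_id y).div hS h0
    simpa only [id_eq, ← hrdef, Pi.div_def] using h
  have hq2y : HasDerivAt (fun y' => (Real.sqrt (x^2+y'^2)-x)^(s-1))
      ((y/r)*(s-1)*(r-x)^(s-1-1)) y := by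
    have h := (hS.sub_const x).rpow_const (p := s-1) (Or.inl huy0.ne')
    rw [show Real.sqrt (x^2+y^2) = r from hrdef.symm] at h
    exact h
  have hB : HasDerivAt (fun y' => ((y'^2 : ℝ))^(a/2)) ((2*y^1)*(a/2)*(y^2)^(a/2-1)) y :=
    (hasDerivAt_pow 2 y).rpow_const (Or.inl hy2.ne')
  have hpy := hB.mul ((hq1y.mul_const s).mul hq2y)
  have hfy : (fun y' => |y'|^a * deriv (fun t => w x t) y')
      =ᶠ[nhds y] fun y' => ((y'^2:ℝ))^(a/2) * ((y'/Real.sqrt (x^2+y'^2))*s*(Real.sqrt (x^2+y'^2)-x)^(s-1)) := by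
    filter_upwards [compl_singleton_mem_nhds hy] with y' hy'
    have hy'0 : y' ≠ 0 := hy'
    rw [(hdy y' hy'0).deriv, habs]
  simp only [Pi.mul_def] at hpx
  rw [hfx, hpx.deriv, hfy.deriv_eq]
  rw [show (fun y' => ((y'^2:ℝ))^(a/2) * ((y'/Real.sqrt (x^2+y'^2))*s*(Real.sqrt (x^2+y'^2)-x)^(s-1)))
      = fun y' => ((y'^2:ℝ))^(a/2) * ((y'/Real.sqrt (x^2+y'^2)*s)*(Real.sqrt (x^2+y'^2)-x)^(s-1)) from by
    funext y'; ring]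
  simp only [Pi.mul_def] at hpy
  rw [hpy.deriv]
  rw [habs y]
  rw [show Real.sqrt (x^2+y^2) = r from hrdef.symm]
  have hBC : ((y^2:ℝ))^(a/2) = (y^2)^(a/2-1) * y^2 := by
    conv_lhs => rw [show a/2 = (a/2-1)+1 by ring]
    rw [Real.rpow_add hy2, Real.rpow_one]
  have hA : (r-x)^(s-1) = (r-x)^(s-1-1) * (r-x) := by
    conv_lhs => rw [show s-1 = (s-1-1)+1 by ring]
    rw [Real.rpow_add hu0, Real.rpow_one]
  rw [hBC, hA]
  generalize (y^2:ℝ)^(a/2-1) = C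
  generalize ((r:ℝ)-x)^(s-1-1) = A2
  have hay : a = 1 - 2*s := by linarith
  subst hay
  field_simp
  linear_combination (C*A2*y^2*(2*s*r - s*x - s^2*r)) * hr2
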